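/- Let g and h be integers with g ≥ 11 and h ≥ 0. Set (as rational numbers) a = (31g + 44)/10, b = g/2, and set k = ⌈5(h+4)/6⌉ and m = ⌈−3(h+4)/4⌉ (ceilings of rational numbers, taken in ℤ). Then b·(13h − 7k + 27) − a·(2h − k + 3) + ((2g − 22)/5)·(k + m) ≥ 3g − (11/2)·h. -/
import Mathlib


theorem stmt6 (g h : ℤ) (hg : 11 ≤ g) (hh : 0 ≤ h)
    (a b : ℚ) (ha : a = (31*(g:ℚ) + 44)/10) (hb : b = (g:ℚ)/2)
    (k m : ℤ)
    (hk : k = ⌈(5*((h:ℚ)+4))/6⌉)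
    (hm : m = ⌈(-3*((h:ℚ)+4))/4⌉) :
    b * (13*(h:ℚ) - 7*(k:ℚ) + 27) - a * (2*(h:ℚ) - (k:ℚ) + 3)
      + ((2*(g:ℚ) - 22)/5) * ((k:ℚ) + (m:ℚ))
      ≥ 3*(g:ℚ) - (11/2) * (h:ℚ) := by
  subst ha hb
  have hm' : (-3*((h:ℚ)+4))/4 ≤ (m:ℚ) := by
    rw [hm]; exact Int.le_ceil _
  have hg' : (11:ℚ) ≤ (g:ℚ) := by exact_mod_cast hg
  nlinarith [mul_nonneg (by linarith : (0:ℚ) ≤ (g:ℚ) - 11)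
    (by linarith : (0:ℚ) ≤ 3*((h:ℚ)+4) + 4*(m:ℚ))]
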